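/- Let m ∈ ℝ^K be a probability vector with all entries strictly positive, ᾱ_s, ᾱ_{t|s} ∈ (0,1), ᾱ_t := ᾱ_s ᾱ_{t|s}, and let x_t ∈ ℝ^K be one-hot. For each one-hot x_0, let v(x_0) denote the Bayes posterior vector (B x_t ⊙ Aᵀ x_0)/⟨x_t,(AB)ᵀ x_0⟩ with A = ᾱ_s I + (1−ᾱ_s)1mᵀ and B = ᾱ_{t|s} I + (1−ᾱ_{t|s})1mᵀ. Let f ∈ ℝ^K be any probability vector and define p := Σ_{k=1}^K v(e_k) f_k. Then p = (1−μ_{t|s}) f + (μ_{t|s} ᾱ_{t|s} + γ) x_t + (μ_{t|s}(1−ᾱ_{t|s}) − γ) m, where μ_{t|s} := (1−ᾱ_s)/(1−ᾱ_t), λ_{t|s} := (1−ᾱ_s)(1−ᾱ_{t|s})⟨m, x_t⟩/(ᾱ_t + (1−ᾱ_t)⟨m, x_t⟩), and γ := (μ_{t|s} − λ_{t|s} − μ_{t|s} ᾱ_{t|s}) ⟨f, x_t⟩. -/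

import Mathlib

/-- The Bayes posterior vector `v(x0) = (B xt ⊙ Aᵀ x0) / ⟨xt, (AB)ᵀ x0⟩` of the
discrete-diffusion forward chain, with `A = ᾱ_s I + (1-ᾱ_s) 1mᵀ` and
`B = ᾱ_{t|s} I + (1-ᾱ_{t|s}) 1mᵀ`. -/
noncomputable def postVec {K : ℕ} (m : Fin K → ℝ) (as ats : ℝ) (xt x0 : Fin K → ℝ) :
    Fin K → ℝ :=
  fun k =>
    ((ats • (1 : Matrix (Fin K) (Fin K) ℝ) + (1 - ats) • Matrix.vecMulVec (1 : Fin K → ℝ) m).mulVec xt k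
        * (as • (1 : Matrix (Fin K) (Fin K) ℝ) + (1 - as) • Matrix.vecMulVec (1 : Fin K → ℝ) m).transpose.mulVec x0 k)
      / (∑ j, xt j *
          (((as • (1 : Matrix (Fin K) (Fin K) ℝ) + (1 - as) • Matrix.vecMulVec (1 : Fin K → ℝ) m)
            * (ats • (1 : Matrix (Fin K) (Fin K) ℝ) + (1 - ats) • Matrix.vecMulVec (1 : Fin K → ℝ) m)).transpose.mulVec x0) j)

/-- `μ_{t|s} = (1-ᾱ_s)/(1-ᾱ_t)` with `ᾱ_t = ᾱ_s ᾱ_{t|s}`. -/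
noncomputable def muCoef (as ats : ℝ) : ℝ := (1 - as) / (1 - as * ats)

/-- `λ_{t|s} = (1-ᾱ_s)(1-ᾱ_{t|s})⟨m, x_t⟩ / (ᾱ_t + (1-ᾱ_t)⟨m, x_t⟩)`. -/
noncomputable def lambdaCoef {K : ℕ} (m : Fin K → ℝ) (as ats : ℝ) (xt : Fin K → ℝ) : ℝ :=
  (1 - as) * (1 - ats) * (∑ i, m i * xt i)
    / (as * ats + (1 - as * ats) * ∑ i, m i * xt i)

theorem postVec_single {K : ℕ} (m : Fin K → ℝ) (as ats : ℝ) (i k j : Fin K)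
    (hm_sum : ∑ l, m l = 1) :
    postVec m as ats (Pi.single i 1) (Pi.single k 1) j
      = ((ats * (Pi.single i 1 : Fin K → ℝ) j + (1 - ats) * m i)
          * (as * (Pi.single k 1 : Fin K → ℝ) j + (1 - as) * m j))
        / (as * ats * (Pi.single i 1 : Fin K → ℝ) k + (1 - as * ats) * m i) := by
  simp only [postVec, Matrix.mulVec, Matrix.mul_apply, Matrix.transpose_apply, Matrix.add_apply,
    Matrix.smul_apply, Matrix.one_apply, Matrix.vecMulVec_apply, Pi.one_apply, dotProduct,
    Pi.single_apply, smul_eq_mul, add_mul, mul_ite, ite_mul, mul_one, mul_zero, zero_mul, one_mul,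
    Finset.sum_add_distrib, Finset.sum_ite_eq, Finset.sum_ite_eq', Finset.mem_univ, if_true,
    Finset.mul_sum, Finset.sum_mul]
  have hsum : (∑ x : Fin K, (1 - as) * m x * ((if x = i then ats else 0) + (1 - ats) * m i))
      = (1 - as) * ats * m i + (1 - as) * (1 - ats) * m i := by
    have h1 : ∀ x ∈ Finset.univ, (1 - as) * m x * ((if x = i then ats else 0) + (1 - ats) * m i)
        = (if x = i then (1 - as) * ats * m i else 0) + ((1 - as) * (1 - ats) * m i) * m x := by
      intro x _; by_cases h : x = i <;> simp [h] <;> ring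
    rw [Finset.sum_congr rfl h1, Finset.sum_add_distrib, Finset.sum_ite_eq' Finset.univ i,
      ← Finset.mul_sum, hm_sum]
    simp
  rw [hsum]
  split_ifs <;>
    first
      | (congr 1 <;> ring1)
      | (exfalso; subst_vars; simp_all)

/-- Closed form of the marginalized backward probability
`p_θ(x_s | x_t) = Σ_{x_0} q(x_s | x_t, x_0) p_θ(x_0 | x_t)`:
it equals `(1-μ) f + (μ ᾱ_{t|s} + γ) x_t + (μ(1-ᾱ_{t|s}) - γ) m`,
where `γ = (μ - λ - μ ᾱ_{t|s}) ⟨f, x_t⟩`. -/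
theorem backward_parameterization_closed_form
    {K : ℕ} (hK : 1 ≤ K) (m : Fin K → ℝ)
    (hm_pos : ∀ k, 0 < m k) (hm_sum : ∑ k, m k = 1)
    (as ats : ℝ) (has : 0 < as ∧ as < 1) (hats : 0 < ats ∧ ats < 1)
    (xt : Fin K → ℝ) (hxt : ∃ i, xt = Pi.single i 1)
    (f : Fin K → ℝ) (hf_nonneg : ∀ k, 0 ≤ f k) (hf_sum : ∑ k, f k = 1) :
    (fun j => ∑ k, postVec m as ats xt (Pi.single k 1) j * f k)
      = fun j =>
        (1 - muCoef as ats) * f j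
          + (muCoef as ats * ats
              + (muCoef as ats - lambdaCoef m as ats xt - muCoef as ats * ats)
                * (∑ i, f i * xt i)) * xt j
          + (muCoef as ats * (1 - ats)
              - (muCoef as ats - lambdaCoef m as ats xt - muCoef as ats * ats)
                * (∑ i, f i * xt i)) * m j := by
  obtain ⟨i, rfl⟩ := hxt
  obtain ⟨has0, has1⟩ := has
  obtain ⟨hats0, hats1⟩ := hats
  have h1 : (0:ℝ) < 1 - as * ats := by nlinarith
  have hmi : 0 < m i := hm_pos i
  have hfxt : (∑ l, f l * (Pi.single i 1 : Fin K → ℝ) l) = f i := by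
    simp [Pi.single_apply, mul_ite, Finset.sum_ite_eq']
  have hmxt : (∑ l, m l * (Pi.single i 1 : Fin K → ℝ) l) = m i := by
    simp [Pi.single_apply, mul_ite, Finset.sum_ite_eq']
  set A := as * ats + (1 - as * ats) * m i with hA
  set B := (1 - as * ats) * m i with hB
  have hApos : 0 < A := by have := mul_pos has0 hats0; nlinarith
  have hBpos : 0 < B := mul_pos h1 hmi
  funext j
  have hDk : ∀ k : Fin K, as * ats * (Pi.single i 1 : Fin K → ℝ) k + (1 - as * ats) * m i
      = if k = i then A else B := by
    intro k; by_cases h : k = i <;> simp [h, hA, hB, Pi.single_apply]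
  have hterm : ∀ k ∈ Finset.univ,
      postVec m as ats (Pi.single i 1) (Pi.single k 1) j * f k
        = (if k = j then
            (ats * (Pi.single i 1 : Fin K → ℝ) j + (1 - ats) * m i) * as * f j
              / (if j = i then A else B) else 0)
          + ((ats * (Pi.single i 1 : Fin K → ℝ) j + (1 - ats) * m i) * (1 - as) * m j)
              * (f k / (if k = i then A else B)) := by
    intro k _
    rw [postVec_single m as ats i k j hm_sum, hDk k]
    have hd : (if k = i then A else B) ≠ 0 := by split <;> positivity
    by_cases hkj : k = j
    · subst hkj
      by_cases hki : k = i
      · subst hki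
        simp only [if_pos rfl, Pi.single_eq_same, if_true]
        have hAne : A ≠ 0 := ne_of_gt hApos
        field_simp
      · have h0 : (Pi.single i 1 : Fin K → ℝ) k = 0 := by
          simp [Pi.single_apply, hki]
        simp only [if_pos rfl, if_neg hki, h0, Pi.single_eq_same, if_true]
        have hBne : B ≠ 0 := ne_of_gt hBpos
        field_simp
    · rw [if_neg hkj]
      have h0 : (Pi.single k 1 : Fin K → ℝ) j = 0 := by
        simp only [Pi.single_apply, ite_eq_right_iff]
        exact fun h => absurd h.symm hkj
      rw [h0]
      by_cases hki : k = i
      · rw [if_pos hki]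
        have hAne : A ≠ 0 := ne_of_gt hApos
        field_simp
        first | ring1 | (left; ring1) | (right; ring1)
      · rw [if_neg hki]
        have hBne : B ≠ 0 := ne_of_gt hBpos
        field_simp
        first | ring1 | (left; ring1) | (right; ring1)
  rw [Finset.sum_congr rfl hterm, Finset.sum_add_distrib,
    Finset.sum_ite_eq' Finset.univ j, ← Finset.mul_sum]
  simp only [Finset.mem_univ, if_true]
  have hS2 : (∑ k, f k / (if k = i then A else B)) = f i / A + (1 - f i) / B := by
    have h2 : ∀ k ∈ Finset.univ, f k / (if k = i then A else B)
        = (if k = i then f i / A - f i / B else 0) + f k / B := by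
      intro k _; by_cases h : k = i
      · rw [if_pos h, if_pos h, h]; ring1
      · rw [if_neg h, if_neg h, zero_add]
    rw [Finset.sum_congr rfl h2, Finset.sum_add_distrib, Finset.sum_ite_eq' Finset.univ i,
      ← Finset.sum_div, hf_sum]
    simp; ring1
  rw [hS2]
  simp only [muCoef, lambdaCoef, hfxt, hmxt]
  have hA' : (as * ats + (1 - as * ats) * m i) = A := rfl
  rw [hA']
  by_cases hji : j = i
  · subst hji
    simp only [Pi.single_apply, eq_self_iff_true, if_true]
    have hAne : A ≠ 0 := ne_of_gt hApos
    have hBne : B ≠ 0 := ne_of_gt hBpos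
    have h1ne : (1 - as * ats) ≠ 0 := ne_of_gt h1
    rw [hA, hB]
    set D := 1 - as * ats with hD
    field_simp
    rw [hD]
    ring1
  · have hj0 : (Pi.single i 1 : Fin K → ℝ) j = 0 := by simp [Pi.single_apply, hji]
    rw [hj0, if_neg hji]
    have hAne : A ≠ 0 := ne_of_gt hApos
    have hBne : B ≠ 0 := ne_of_gt hBpos
    have h1ne : (1 - as * ats) ≠ 0 := ne_of_gt h1
    rw [hA, hB]
    set D := 1 - as * ats with hD
    field_simp
    rw [hD]
    ring1
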